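/- Let X be a topological group with its standard (coarse) bornology, endowed with any one of its left, right, upper, or lower (Roelcke) uniform structures. Then X is uniformly locally bounded if and only if X admits a bounded identity neighborhood. -/

import Mathlib

open Filter Set Pointwise

def CoarselyBdd (X : Type*) [Group X] [TopologicalSpace X] (A : Set X) : Prop :=
  ∀ V : ℕ → Set X, (∀ n, IsOpen (V n)) → (∀ n, V n ⊆ V (n + 1)) →
    (∀ n, V n * V n ⊆ V (n + 1)) → (⋃ n, V n) = Set.univ → ∃ k, A ⊆ V k

section Helpers
set_option linter.unusedSectionVars false
variable {X : Type*} [Group X] [TopologicalSpace X] [IsTopologicalGroup X]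

lemma cb_mono {A B : Set X} (h : A ⊆ B) (hB : CoarselyBdd X B) : CoarselyBdd X A :=
  fun V h1 h2 h3 h4 => (hB V h1 h2 h3 h4).imp fun _ hk => h.trans hk

lemma chain_mono (V : ℕ → Set X) (h : ∀ n, V n ⊆ V (n + 1)) : Monotone V :=
  monotone_nat_of_le_succ h

lemma cb_singleton (x : X) : CoarselyBdd X {x} := by
  intro V _ _ _ h4
  have : x ∈ ⋃ n, V n := h4 ▸ mem_univ x
  obtain ⟨k, hk⟩ := mem_iUnion.mp this
  exact ⟨k, by simpa⟩

lemma cb_mul {A B : Set X} (hA : CoarselyBdd X A) (hB : CoarselyBdd X B) :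
    CoarselyBdd X (A * B) := by
  intro V h1 h2 h3 h4
  obtain ⟨k, hk⟩ := hA V h1 h2 h3 h4
  obtain ⟨m, hm⟩ := hB V h1 h2 h3 h4
  refine ⟨max k m + 1, ?_⟩
  have := h3 (max k m)
  exact (mul_subset_mul (hk.trans (chain_mono V h2 (le_max_left k m)))
    (hm.trans (chain_mono V h2 (le_max_right k m)))).trans this

lemma cb_inv {A : Set X} (hA : CoarselyBdd X A) : CoarselyBdd X A⁻¹ := by
  intro V h1 h2 h3 h4
  set W : ℕ → Set X := fun n => V n ∩ (V n)⁻¹ with hW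
  have hW1 : ∀ n, IsOpen (W n) := fun n => (h1 n).inter (h1 n).inv
  have hW2 : ∀ n, W n ⊆ W (n + 1) := fun n =>
    inter_subset_inter (h2 n) (Set.inv_subset_inv.mpr (h2 n))
  have hW3 : ∀ n, W n * W n ⊆ W (n + 1) := by
    intro n z hz
    obtain ⟨a, ha, b, hb, rfl⟩ := hz
    constructor
    · exact h3 n (Set.mul_mem_mul ha.1 hb.1)
    · rw [Set.mem_inv, mul_inv_rev]
      exact h3 n (Set.mul_mem_mul hb.2 ha.2)
  have hW4 : (⋃ n, W n) = Set.univ := by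
    ext x
    simp only [mem_iUnion, mem_univ, iff_true]
    have hx : x ∈ ⋃ n, V n := h4 ▸ mem_univ x
    have hx' : x⁻¹ ∈ ⋃ n, V n := h4 ▸ mem_univ x⁻¹
    obtain ⟨k, hk⟩ := mem_iUnion.mp hx
    obtain ⟨m, hm⟩ := mem_iUnion.mp hx'
    exact ⟨max k m, chain_mono V h2 (le_max_left k m) hk,
      by rw [Set.mem_inv]; exact chain_mono V h2 (le_max_right k m) hm⟩
  obtain ⟨k, hk⟩ := hA W hW1 hW2 hW3 hW4
  refine ⟨k, fun a ha => ?_⟩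
  have := hk ha
  simpa using this.2

end Helpers

theorem ulb_iff_locally_bounded {X : Type*} [Group X] [TopologicalSpace X]
    [IsTopologicalGroup X] :
    ((∃ V ∈ nhds (1 : X), ∀ B : Set X, CoarselyBdd X B →
        CoarselyBdd X {y | ∃ x ∈ B, x⁻¹ * y ∈ V}) ↔
      ∃ U ∈ nhds (1 : X), CoarselyBdd X U) ∧
    ((∃ V ∈ nhds (1 : X), ∀ B : Set X, CoarselyBdd X B →
        CoarselyBdd X {y | ∃ x ∈ B, x * y⁻¹ ∈ V}) ↔
      ∃ U ∈ nhds (1 : X), CoarselyBdd X U) ∧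
    ((∃ V ∈ nhds (1 : X), ∀ B : Set X, CoarselyBdd X B →
        CoarselyBdd X {y | ∃ x ∈ B, x⁻¹ * y ∈ V ∧ x * y⁻¹ ∈ V}) ↔
      ∃ U ∈ nhds (1 : X), CoarselyBdd X U) ∧
    ((∃ V ∈ nhds (1 : X), ∀ B : Set X, CoarselyBdd X B →
        CoarselyBdd X {y | ∃ x ∈ B, x ∈ V * {y} * V}) ↔
      ∃ U ∈ nhds (1 : X), CoarselyBdd X U) := by
  refine ⟨⟨?_, ?_⟩, ⟨?_, ?_⟩, ⟨?_, ?_⟩, ⟨?_, ?_⟩⟩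
  · -- left, forward
    rintro ⟨V, hV, h⟩
    refine ⟨V, hV, cb_mono ?_ (h {1} (cb_singleton 1))⟩
    intro y hy
    exact ⟨1, rfl, by simpa using hy⟩
  · -- left, backward
    rintro ⟨U, hU, hUb⟩
    refine ⟨U, hU, fun B hB => cb_mono ?_ (cb_mul hB hUb)⟩
    rintro y ⟨x, hx, hxy⟩
    exact ⟨x, hx, x⁻¹ * y, hxy, by group⟩
  · -- right, forward
    rintro ⟨V, hV, h⟩
    refine ⟨V⁻¹, inv_mem_nhds_one X hV, cb_mono ?_ (h {1} (cb_singleton 1))⟩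
    intro y hy
    exact ⟨1, rfl, by simpa using hy⟩
  · -- right, backward
    rintro ⟨U, hU, hUb⟩
    refine ⟨U, hU, fun B hB => cb_mono ?_ (cb_mul (cb_inv hUb) hB)⟩
    rintro y ⟨x, hx, hxy⟩
    refine ⟨(x * y⁻¹)⁻¹, by simpa using hxy, x, hx, by group⟩
  · -- Roelcke ∨, forward
    rintro ⟨V, hV, h⟩
    refine ⟨V ∩ V⁻¹, Filter.inter_mem hV (inv_mem_nhds_one X hV),
      cb_mono ?_ (h {1} (cb_singleton 1))⟩
    rintro y ⟨hy1, hy2⟩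
    exact ⟨1, rfl, by simpa using hy1, by simpa using hy2⟩
  · -- ∨, backward
    rintro ⟨U, hU, hUb⟩
    refine ⟨U, hU, fun B hB => cb_mono ?_ (cb_mul hB hUb)⟩
    rintro y ⟨x, hx, hxy, _⟩
    exact ⟨x, hx, x⁻¹ * y, hxy, by group⟩
  · -- ∧, forward
    rintro ⟨V, hV, h⟩
    have h1V : (1 : X) ∈ V⁻¹ := by simpa using mem_of_mem_nhds (inv_mem_nhds_one X hV)
    refine ⟨V⁻¹ * V⁻¹, ?_, cb_mono ?_ (h {1} (cb_singleton 1))⟩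
    · exact Filter.mem_of_superset (inv_mem_nhds_one X hV)
        (fun z hz => ⟨z, hz, 1, h1V, mul_one z⟩)
    · rintro y ⟨a, ha, b, hb, rfl⟩
      refine ⟨1, rfl, a⁻¹ * (a * b), ⟨a⁻¹, by simpa using ha, a * b, rfl, rfl⟩,
        b⁻¹, by simpa using hb, by group⟩
  · -- ∧, backward
    rintro ⟨U, hU, hUb⟩
    refine ⟨U, hU, fun B hB => cb_mono ?_ (cb_mul (cb_mul (cb_inv hUb) hB) (cb_inv hUb))⟩
    rintro y ⟨x, hx, a, ⟨v, hv, y', hy', rfl⟩, w, hw, hxe⟩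
    obtain rfl : y' = y := hy'
    exact ⟨v⁻¹ * x, ⟨v⁻¹, by simpa using hv, x, hx, rfl⟩, w⁻¹, by simpa using hw,
      by rw [← hxe]; group⟩
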